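/- Let 0 ≤ p < 1 and q ≥ 1 be real numbers, let a ∈ ℤ^n, and define P(x,y) = |a^T(x − y)|^q + Σ_{j=1}^n |x_j + y_j − 1|^q + (1/2) Σ_{j=1}^n (|x_j|^p + |y_j|^p) for x, y ∈ ℝ^n. Then there exists a subset S ⊆ {1,…,n} with Σ_{i∈S} a_i = Σ_{i∉S} a_i if and only if the infimum of P over ℝ^n × ℝ^n equals n·c(p,q), where c(p,q) = min_{z∈ℝ} (|1−z|^q + (1/2)|z|^p); moreover when such a partition exists this infimum is attained. -/

import Mathlib

/-- `|z|^p` with the paper's convention `z^0 = 0` for `z = 0` and `z^0 = 1` for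
`z ≠ 0` (for `p > 0` this is just `|z|^p`). -/
noncomputable def absPow (p z : ℝ) : ℝ := if z = 0 then 0 else |z| ^ p

/-- The objective of the partition reduction:
`P(x,y) = |aᵀ(x−y)|^q + Σ_j |x_j + y_j − 1|^q + (1/2) Σ_j (|x_j|^p + |y_j|^p)`. -/
noncomputable def Ppart (n : ℕ) (p q : ℝ) (a : Fin n → ℤ) (x y : Fin n → ℝ) : ℝ :=
  |∑ j, (a j : ℝ) * (x j - y j)| ^ q + ∑ j, |x j + y j - 1| ^ q +
    (1 / 2) * ∑ j, (absPow p (x j) + absPow p (y j))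

open Real Set

lemma absPow_nonneg {p : ℝ} (z : ℝ) : 0 ≤ absPow p z := by
  unfold absPow; split
  · exact le_refl _
  · exact Real.rpow_nonneg (abs_nonneg _) _

lemma absPow_zero (p : ℝ) : absPow p 0 = 0 := if_pos rfl

lemma absPow_one (p : ℝ) : absPow p 1 = 1 := by
  simp [absPow]

lemma absPow_le_one_of_zero (z : ℝ) : absPow 0 z ≤ 1 := by
  unfold absPow; split
  · norm_num
  · simp

lemma absPow_of_pos {p : ℝ} (hp : 0 < p) (z : ℝ) : absPow p z = |z| ^ p := by
  unfold absPow; split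
  · subst ‹z = 0›; rw [abs_zero, Real.zero_rpow hp.ne']
  · rfl

lemma rpow_subadd {p : ℝ} (hp0 : 0 < p) (hp1 : p ≤ 1) {s t : ℝ} (hs : 0 ≤ s) (ht : 0 ≤ t) :
    (s + t) ^ p ≤ s ^ p + t ^ p := by
  have := NNReal.rpow_add_le_add_rpow (⟨s, hs⟩ : NNReal) ⟨t, ht⟩ hp0.le hp1
  exact_mod_cast this

lemma rpow_subadd_strict {p : ℝ} (hp0 : 0 < p) (hp1 : p < 1) {s t : ℝ} (hs : 0 < s) (ht : 0 < t) :
    (s + t) ^ p < s ^ p + t ^ p := by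
  have hst : (0:ℝ) < s + t := by linarith
  have h1 : (s + t) ^ p = (s + t) * (s + t) ^ (p - 1) := by
    nth_rewrite 1 [show p = 1 + (p - 1) by ring]
    rw [Real.rpow_add hst, Real.rpow_one]
  have h4 : s ^ p = s * s ^ (p - 1) := by
    nth_rewrite 1 [show p = 1 + (p - 1) by ring]
    rw [Real.rpow_add hs, Real.rpow_one]
  have h5 : t ^ p = t * t ^ (p - 1) := by
    nth_rewrite 1 [show p = 1 + (p - 1) by ring]
    rw [Real.rpow_add ht, Real.rpow_one]
  have h2 : (s + t) ^ (p - 1) < s ^ (p - 1) :=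
    Real.rpow_lt_rpow_of_neg hs (by linarith) (by linarith)
  have h3 : (s + t) ^ (p - 1) < t ^ (p - 1) :=
    Real.rpow_lt_rpow_of_neg ht (by linarith) (by linarith)
  rw [h1, h4, h5]
  nlinarith [mul_lt_mul_of_pos_left h2 hs, mul_lt_mul_of_pos_left h3 ht]

lemma absPow_add_le {p : ℝ} (hp0 : 0 ≤ p) (hp1 : p < 1) (u v : ℝ) :
    absPow p (u + v) ≤ absPow p u + absPow p v := by
  rcases eq_or_lt_of_le hp0 with rfl | hp
  · by_cases huv : u + v = 0
    · rw [huv, absPow_zero]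
      exact add_nonneg (absPow_nonneg u) (absPow_nonneg v)
    · have : u ≠ 0 ∨ v ≠ 0 := by
        by_contra h; push_neg at h; exact huv (by rw [h.1, h.2, add_zero])
      have hle : absPow 0 (u + v) = 1 := by
        unfold absPow; rw [if_neg huv, Real.rpow_zero]
      rcases this with h | h
      · have : absPow 0 u = 1 := by unfold absPow; rw [if_neg h, Real.rpow_zero]
        rw [hle, this]; have := absPow_nonneg (p := 0) v; linarith
      · have : absPow 0 v = 1 := by unfold absPow; rw [if_neg h, Real.rpow_zero]
        rw [hle, this]; have := absPow_nonneg (p := 0) u; linarith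
  · rw [absPow_of_pos hp, absPow_of_pos hp, absPow_of_pos hp]
    calc |u + v| ^ p ≤ (|u| + |v|) ^ p :=
          Real.rpow_le_rpow (abs_nonneg _) (abs_add_le u v) hp.le
      _ ≤ |u| ^ p + |v| ^ p := rpow_subadd hp hp1.le (abs_nonneg u) (abs_nonneg v)

lemma absPow_add_lt {p : ℝ} (hp0 : 0 ≤ p) (hp1 : p < 1) {u v : ℝ} (hu : u ≠ 0) (hv : v ≠ 0) :
    absPow p (u + v) < absPow p u + absPow p v := by
  rcases eq_or_lt_of_le hp0 with rfl | hp
  · have h1 : absPow 0 u = 1 := by unfold absPow; rw [if_neg hu, Real.rpow_zero]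
    have h2 : absPow 0 v = 1 := by unfold absPow; rw [if_neg hv, Real.rpow_zero]
    have := absPow_le_one_of_zero (u + v)
    rw [h1, h2]; linarith
  · rw [absPow_of_pos hp, absPow_of_pos hp, absPow_of_pos hp]
    calc |u + v| ^ p ≤ (|u| + |v|) ^ p :=
          Real.rpow_le_rpow (abs_nonneg _) (abs_add_le u v) hp.le
      _ < |u| ^ p + |v| ^ p :=
          rpow_subadd_strict hp hp1 (abs_pos.mpr hu) (abs_pos.mpr hv)

noncomputable def gfun (p q z : ℝ) : ℝ := |1 - z| ^ q + (1 / 2) * absPow p z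

section gmin

variable {p q c : ℝ}

lemma g_nonneg (p q z : ℝ) : 0 ≤ gfun p q z :=
  add_nonneg (Real.rpow_nonneg (abs_nonneg _) _)
    (mul_nonneg (by norm_num) (absPow_nonneg z))

lemma hc_lb (hc : IsLeast (Set.range fun z : ℝ => |1 - z| ^ q + (1 / 2) * absPow p z) c)
    (z : ℝ) : c ≤ gfun p q z := hc.2 ⟨z, rfl⟩

lemma hc_mem (hc : IsLeast (Set.range fun z : ℝ => |1 - z| ^ q + (1 / 2) * absPow p z) c) :
    ∃ z, gfun p q z = c := hc.1

lemma g_one (hq : 1 ≤ q) : gfun p q 1 = 1 / 2 := by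
  unfold gfun
  rw [sub_self, abs_zero, Real.zero_rpow (by linarith), absPow_one]
  ring

lemma g_zero (p q : ℝ) : gfun p q 0 = 1 := by
  unfold gfun
  rw [sub_zero, abs_one, Real.one_rpow, absPow_zero]
  ring

lemma c_le_half (hq : 1 ≤ q)
    (hc : IsLeast (Set.range fun z : ℝ => |1 - z| ^ q + (1 / 2) * absPow p z) c) :
    c ≤ 1 / 2 := by
  have := hc_lb hc 1
  have h := hc.2 ⟨1, rfl⟩
  calc c ≤ gfun p q 1 := h
    _ = 1 / 2 := g_one hq

lemma c_nonneg (hc : IsLeast (Set.range fun z : ℝ => |1 - z| ^ q + (1 / 2) * absPow p z) c) :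
    0 ≤ c := by
  obtain ⟨z, hz⟩ := hc_mem hc
  rw [← hz]; exact g_nonneg p q z

lemma minimizer_ne_zero (hq : 1 ≤ q)
    (hc : IsLeast (Set.range fun z : ℝ => |1 - z| ^ q + (1 / 2) * absPow p z) c)
    {z : ℝ} (hz : gfun p q z = c) : z ≠ 0 := by
  intro h
  rw [h, g_zero] at hz
  have := c_le_half hq hc
  linarith

lemma minimizer_pos (hq : 1 ≤ q)
    (hc : IsLeast (Set.range fun z : ℝ => |1 - z| ^ q + (1 / 2) * absPow p z) c)
    {z : ℝ} (hz : gfun p q z = c) : 0 < z := by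
  rcases lt_trichotomy z 0 with h | h | h
  · exfalso
    set w := -z with hw
    have hwpos : 0 < w := by simp [hw]; linarith
    have habs : |z| = |w| := by rw [abs_neg]
    have h1 : |1 - w| < |1 - z| := by
      rw [show (1 : ℝ) - z = 1 + w by rw [hw]; ring,
        abs_of_pos (show (0:ℝ) < 1 + w by linarith), abs_lt]
      constructor <;> linarith
    have h2 : |1 - w| ^ q < |1 - z| ^ q :=
      Real.rpow_lt_rpow (abs_nonneg _) h1 (by linarith)
    have h3 : absPow p w = absPow p z := by
      unfold absPow
      rw [if_neg hwpos.ne', if_neg (by linarith : z ≠ 0), habs]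
    have : gfun p q w < gfun p q z := by
      unfold gfun; rw [h3]; linarith
    have := hc_lb hc w
    linarith [hz ▸ this]
  · exact absurd h (minimizer_ne_zero hq hc hz)
  · exact h

end gmin

section unique

variable {p q c : ℝ}

/-- The log-ratio function controlling the sign of `g'` on `(0,1)`. -/
noncomputable def Lfun (p q z : ℝ) : ℝ :=
  (Real.log (p / 2) + (p - 1) * Real.log z) - (Real.log q + (q - 1) * Real.log (1 - z))

lemma Lfun_strictConvexOn (hp : 0 < p) (hp1 : p < 1) (hq : 1 ≤ q) :
    StrictConvexOn ℝ (Set.Ioo (0:ℝ) 1) (Lfun p q) := by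
  constructor
  · exact convex_Ioo 0 1
  · rintro x ⟨hx0, hx1⟩ y ⟨hy0, hy1⟩ hxy a b ha hb hab
    have hmem : a * x + b * y ∈ Set.Ioo (0:ℝ) 1 := by
      constructor
      · positivity
      · nlinarith
    have hlog1 := strictConcaveOn_log_Ioi.2 (Set.mem_Ioi.mpr hx0) (Set.mem_Ioi.mpr hy0)
      hxy ha hb hab
    simp only [smul_eq_mul] at hlog1
    have hlog2 := strictConcaveOn_log_Ioi.concaveOn.2
      (Set.mem_Ioi.mpr (by linarith : (0:ℝ) < 1 - x))
      (Set.mem_Ioi.mpr (by linarith : (0:ℝ) < 1 - y)) ha.le hb.le hab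
    simp only [smul_eq_mul] at hlog2
    have hcombo : a * (1 - x) + b * (1 - y) = 1 - (a * x + b * y) := by
      have : a + b = 1 := hab; nlinarith [this]
    rw [hcombo] at hlog2
    have e1 : (p - 1) * Real.log (a * x + b * y)
        < (p - 1) * (a * Real.log x + b * Real.log y) := by
      have := mul_lt_mul_of_neg_left hlog1 (by linarith : p - 1 < 0)
      linarith
    have e2 : -(q - 1) * Real.log (1 - (a * x + b * y))
        ≤ -(q - 1) * (a * Real.log (1 - x) + b * Real.log (1 - y)) := by
      have := mul_le_mul_of_nonpos_left hlog2 (by linarith : -(q - 1) ≤ 0)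
      linarith
    simp only [smul_eq_mul, Lfun]
    have hR : a * (Real.log (p / 2) + (p - 1) * Real.log x
          - (Real.log q + (q - 1) * Real.log (1 - x)))
        + b * (Real.log (p / 2) + (p - 1) * Real.log y
          - (Real.log q + (q - 1) * Real.log (1 - y)))
        = Real.log (p / 2) - Real.log q
          + (p - 1) * (a * Real.log x + b * Real.log y)
          - (q - 1) * (a * Real.log (1 - x) + b * Real.log (1 - y)) := by
      linear_combination (Real.log (p / 2) - Real.log q) * hab
    rw [hR]
    linarith [e1, e2]

/-- Smooth version of `gfun` on `(0,1]`. -/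
noncomputable def Gfun (p q z : ℝ) : ℝ := (1 - z) ^ q + (1 / 2) * z ^ p

/-- derivative value of `Gfun` -/
noncomputable def Gder (p q z : ℝ) : ℝ := (1 / 2) * (p * z ^ (p - 1)) - q * (1 - z) ^ (q - 1)

lemma gfun_eq_Gfun (hp : 0 < p) {z : ℝ} (h0 : 0 < z) (h1 : z ≤ 1) :
    gfun p q z = Gfun p q z := by
  unfold gfun Gfun
  rw [abs_of_nonneg (by linarith : (0:ℝ) ≤ 1 - z), absPow_of_pos hp, abs_of_pos h0]

lemma hasDerivAt_Gfun (z : ℝ) (h0 : 0 < z) (h1 : z < 1) :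
    HasDerivAt (Gfun p q) (Gder p q z) z := by
  have h1' : (0:ℝ) < 1 - z := by linarith
  have hA : HasDerivAt (fun z : ℝ => z ^ p) (p * z ^ (p - 1)) z :=
    Real.hasDerivAt_rpow_const (Or.inl h0.ne')
  have hsub : HasDerivAt (fun z : ℝ => 1 - z) (-1) z := by
    simpa using (hasDerivAt_id z).const_sub 1
  have hB : HasDerivAt (fun z : ℝ => (1 - z) ^ q) (q * (1 - z) ^ (q - 1) * (-1)) z :=
    (Real.hasDerivAt_rpow_const (x := 1 - z) (p := q) (Or.inl h1'.ne')).comp z hsub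
  have := hB.add (hA.const_mul (1 / 2))
  have e : Gder p q z = q * (1 - z) ^ (q - 1) * (-1) + 1 / 2 * (p * z ^ (p - 1)) := by
    unfold Gder; ring
  rw [e]; exact this

lemma continuous_Gfun (hp : 0 ≤ p) (hq : 0 ≤ q) : Continuous (Gfun p q) := by
  unfold Gfun
  have h1 : Continuous fun z : ℝ => (1 - z) ^ q :=
    (Real.continuous_rpow_const hq).comp (continuous_const.sub continuous_id)
  have h2 : Continuous fun z : ℝ => z ^ p := Real.continuous_rpow_const hp
  continuity

lemma Gder_neg_iff (hp : 0 < p) (hp1 : p < 1) (hq : 1 ≤ q) {z : ℝ} (h0 : 0 < z) (h1 : z < 1) :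
    (Gder p q z < 0 ↔ Lfun p q z < 0) ∧ (Gder p q z = 0 ↔ Lfun p q z = 0)
     ∧ (0 < Gder p q z ↔ 0 < Lfun p q z) := by
  have h1' : (0:ℝ) < 1 - z := by linarith
  have hE2 : (0:ℝ) < (1 / 2) * (p * z ^ (p - 1)) := by
    have := Real.rpow_pos_of_pos h0 (p - 1); positivity
  have hE1 : (0:ℝ) < q * (1 - z) ^ (q - 1) := by
    have := Real.rpow_pos_of_pos h1' (q - 1); positivity
  have hlogE2 : Real.log ((1 / 2) * (p * z ^ (p - 1)))
      = Real.log (p / 2) + (p - 1) * Real.log z := by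
    rw [show (1 / 2) * (p * z ^ (p - 1)) = (p / 2) * z ^ (p - 1) by ring,
      Real.log_mul (by positivity) (Real.rpow_pos_of_pos h0 _).ne',
      Real.log_rpow h0]
  have hlogE1 : Real.log (q * (1 - z) ^ (q - 1))
      = Real.log q + (q - 1) * Real.log (1 - z) := by
    rw [Real.log_mul (by positivity) (Real.rpow_pos_of_pos h1' _).ne', Real.log_rpow h1']
  have hL : Lfun p q z = Real.log ((1 / 2) * (p * z ^ (p - 1)))
      - Real.log (q * (1 - z) ^ (q - 1)) := by
    rw [hlogE1, hlogE2]; unfold Lfun; ring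
  unfold Gder
  rw [hL]
  refine ⟨?_, ?_, ?_⟩
  · rw [sub_neg, sub_neg]
    exact ⟨fun h => Real.log_lt_log hE2 h, fun h => by
      have := Real.exp_lt_exp.mpr h
      rwa [Real.exp_log hE2, Real.exp_log hE1] at this⟩
  · rw [sub_eq_zero, sub_eq_zero]
    constructor
    · rintro h; rw [h]
    · intro h
      have := congrArg Real.exp h
      rwa [Real.exp_log hE2, Real.exp_log hE1] at this
  · rw [sub_pos, sub_pos]
    exact ⟨fun h => Real.log_lt_log hE1 h, fun h => by
      have := Real.exp_lt_exp.mpr h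
      rwa [Real.exp_log hE2, Real.exp_log hE1] at this⟩

lemma minimizer_le_one (hp : 0 < p) (hq : 1 ≤ q)
    (hc : IsLeast (Set.range fun z : ℝ => |1 - z| ^ q + (1 / 2) * absPow p z) c)
    {z : ℝ} (hz : gfun p q z = c) : z ≤ 1 := by
  by_contra h
  push_neg at h
  have h1 : (1:ℝ) < |z| ^ p := by
    rw [abs_of_pos (by linarith : (0:ℝ) < z)]
    calc (1:ℝ) = 1 ^ p := (Real.one_rpow p).symm
      _ < z ^ p := Real.rpow_lt_rpow (by norm_num) h hp
  have h2 : absPow p z = |z| ^ p := absPow_of_pos hp z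
  have h3 : c ≤ 1 / 2 := c_le_half hq hc
  have h4 : (0:ℝ) ≤ |1 - z| ^ q := Real.rpow_nonneg (abs_nonneg _) _
  unfold gfun at hz
  rw [h2] at hz
  linarith

lemma minimizer_unique_aux (hp : 0 < p) (hp1 : p < 1) (hq : 1 ≤ q)
    (hc : IsLeast (Set.range fun z : ℝ => |1 - z| ^ q + (1 / 2) * absPow p z) c)
    {z1 z2 : ℝ} (h1 : gfun p q z1 = c) (h2 : gfun p q z2 = c) (hlt : z1 < z2) : False := by
  have hz1 : 0 < z1 := minimizer_pos hq hc h1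
  have hz2 : 0 < z2 := minimizer_pos hq hc h2
  have hz2le : z2 ≤ 1 := minimizer_le_one hp hq hc h2
  have hz11 : z1 < 1 := lt_of_lt_of_le hlt hz2le
  have hGlb : ∀ z : ℝ, 0 < z → z ≤ 1 → c ≤ Gfun p q z := fun z a b => by
    rw [← gfun_eq_Gfun hp a b]; exact hc_lb hc z
  have G1 : Gfun p q z1 = c := by rw [← gfun_eq_Gfun hp hz1 hz11.le]; exact h1
  have G2 : Gfun p q z2 = c := by rw [← gfun_eq_Gfun hp hz2 hz2le]; exact h2
  have hLzero : ∀ w : ℝ, 0 < w → w < 1 → (∀ z : ℝ, 0 < z → z ≤ 1 → Gfun p q w ≤ Gfun p q z) →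
      Lfun p q w = 0 := by
    intro w hw0 hw1 hmin
    have hloc : IsLocalMin (Gfun p q) w :=
      Filter.eventually_of_mem (Ioo_mem_nhds hw0 hw1) fun z hz => hmin z hz.1 hz.2.le
    have hder : Gder p q w = 0 := hloc.hasDerivAt_eq_zero (hasDerivAt_Gfun w hw0 hw1)
    exact ((Gder_neg_iff hp hp1 hq hw0 hw1).2.1).mp hder
  by_cases hcase : ∃ w ∈ Set.Ioo z1 z2, c < Gfun p q w
  · obtain ⟨w, hw, hcw⟩ := hcase
    obtain ⟨hwl, hwr⟩ := hw
    have hw0 : 0 < w := lt_trans hz1 hwl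
    have hw1 : w < 1 := lt_of_lt_of_le hwr hz2le
    -- MVT on [z1, w]
    obtain ⟨u, hu, hslopeu⟩ := exists_hasDerivAt_eq_slope (Gfun p q) (Gder p q) hwl
      ((continuous_Gfun hp.le (by linarith)).continuousOn)
      (fun x hx => hasDerivAt_Gfun x (lt_trans hz1 hx.1) (lt_trans hx.2 hw1))
    obtain ⟨v, hv, hslopev⟩ := exists_hasDerivAt_eq_slope (Gfun p q) (Gder p q) hwr
      ((continuous_Gfun hp.le (by linarith)).continuousOn)
      (fun x hx => hasDerivAt_Gfun x (lt_trans hw0 hx.1) (lt_of_lt_of_le hx.2 hz2le))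
    have hGu : 0 < Gder p q u := by
      rw [hslopeu, G1]
      apply div_pos (by linarith) (by linarith [hu.1, hu.2])
    have hGv : Gder p q v < 0 := by
      rw [hslopev, G2]
      apply div_neg_of_neg_of_pos (by linarith) (by linarith [hv.1, hv.2])
    have hu0 : 0 < u := lt_trans hz1 hu.1
    have hu1 : u < 1 := lt_trans hu.2 hw1
    have hv0 : 0 < v := lt_trans hw0 hv.1
    have hv1 : v < 1 := lt_of_lt_of_le hv.2 hz2le
    have Lz1 : Lfun p q z1 = 0 :=
      hLzero z1 hz1 hz11 (fun z a b => by rw [G1]; exact hGlb z a b)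
    have Lu : 0 < Lfun p q u := ((Gder_neg_iff hp hp1 hq hu0 hu1).2.2).mp hGu
    have Lv : Lfun p q v < 0 := ((Gder_neg_iff hp hp1 hq hv0 hv1).1).mp hGv
    have hseg : u ∈ segment ℝ z1 v := by
      rw [segment_eq_Icc (by linarith [hu.1, hu.2, hv.1] : z1 ≤ v)]
      exact ⟨le_of_lt hu.1, le_of_lt (lt_trans hu.2 hv.1)⟩
    have hle := (Lfun_strictConvexOn hp hp1 hq).convexOn.le_on_segment
      (Set.mem_Ioo.mpr ⟨hz1, hz11⟩) (Set.mem_Ioo.mpr ⟨hv0, hv1⟩) hseg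
    rw [Lz1] at hle
    have : max (0:ℝ) (Lfun p q v) ≤ 0 := max_le le_rfl Lv.le
    linarith
  · push_neg at hcase
    have hconst : ∀ w ∈ Set.Ioo z1 z2, Gfun p q w = c := fun w hw =>
      le_antisymm (hcase w hw) (hGlb w (lt_trans hz1 hw.1) (le_of_lt (lt_of_lt_of_le hw.2 hz2le)))
    have hLw : ∀ w ∈ Set.Ioo z1 z2, Lfun p q w = 0 := by
      intro w hw
      have hw0 : 0 < w := lt_trans hz1 hw.1
      have hw1 : w < 1 := lt_of_lt_of_le hw.2 hz2le
      have hloc : IsLocalMin (Gfun p q) w :=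
        Filter.eventually_of_mem (Ioo_mem_nhds hw.1 hw.2) fun z hz => by
          rw [hconst w hw, hconst z hz]
      have hder : Gder p q w = 0 := hloc.hasDerivAt_eq_zero (hasDerivAt_Gfun w hw0 hw1)
      exact ((Gder_neg_iff hp hp1 hq hw0 hw1).2.1).mp hder
    set d : ℝ := (z2 - z1) / 4 with hd
    have hdpos : 0 < d := by rw [hd]; linarith
    have m1 : z1 + d ∈ Set.Ioo z1 z2 := ⟨by linarith, by rw [hd]; linarith⟩
    have m2 : z1 + 2*d ∈ Set.Ioo z1 z2 := ⟨by linarith, by rw [hd]; linarith⟩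
    have m3 : z1 + 3*d ∈ Set.Ioo z1 z2 := ⟨by linarith, by rw [hd]; linarith⟩
    have mem01 : ∀ w ∈ Set.Ioo z1 z2, w ∈ Set.Ioo (0:ℝ) 1 := fun w hw =>
      ⟨lt_trans hz1 hw.1, lt_of_lt_of_le hw.2 hz2le⟩
    have hstr := (Lfun_strictConvexOn hp hp1 hq).2 (mem01 _ m1) (mem01 _ m3)
      (by intro h; nlinarith [hdpos, congrArg id h] : z1 + d ≠ z1 + 3*d)
      (by norm_num : (0:ℝ) < 1/2) (by norm_num : (0:ℝ) < 1/2) (by norm_num)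
    simp only [smul_eq_mul] at hstr
    have hmid : (1/2) * (z1 + d) + (1/2) * (z1 + 3*d) = z1 + 2*d := by ring
    rw [hmid, hLw _ m1, hLw _ m2, hLw _ m3] at hstr
    linarith

end unique

section main

variable {n : ℕ} {p q c : ℝ} {a : Fin n → ℤ}

lemma Ppart_eq (n : ℕ) (p q : ℝ) (a : Fin n → ℤ) (x y : Fin n → ℝ) :
    Ppart n p q a x y = |∑ j, (a j : ℝ) * (x j - y j)| ^ q +
      ∑ j, (|x j + y j - 1| ^ q + (1 / 2) * (absPow p (x j) + absPow p (y j))) := by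
  unfold Ppart
  have h : ∑ j, (|x j + y j - 1| ^ q + (1 / 2) * (absPow p (x j) + absPow p (y j)))
      = ∑ j, |x j + y j - 1| ^ q + (1 / 2) * ∑ j, (absPow p (x j) + absPow p (y j)) := by
    rw [Finset.sum_add_distrib, Finset.mul_sum]
  rw [h]
  ring

lemma coord_lb (hp1 : p < 1) (hq : 1 ≤ q)
    (hc : IsLeast (Set.range fun z : ℝ => |1 - z| ^ q + (1 / 2) * absPow p z) c)
    (hp0 : 0 ≤ p) (u v : ℝ) :
    c ≤ |u + v - 1| ^ q + (1 / 2) * (absPow p u + absPow p v) := by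
  have h1 : |u + v - 1| = |1 - (u + v)| := abs_sub_comm _ _
  have h2 : absPow p (u + v) ≤ absPow p u + absPow p v := absPow_add_le hp0 hp1 u v
  calc c ≤ gfun p q (u + v) := hc_lb hc _
    _ = |1 - (u + v)| ^ q + (1 / 2) * absPow p (u + v) := rfl
    _ ≤ |1 - (u + v)| ^ q + (1 / 2) * (absPow p u + absPow p v) := by linarith
    _ = |u + v - 1| ^ q + (1 / 2) * (absPow p u + absPow p v) := by rw [h1]

lemma Ppart_lb (hp0 : 0 ≤ p) (hp1 : p < 1) (hq : 1 ≤ q)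
    (hc : IsLeast (Set.range fun z : ℝ => |1 - z| ^ q + (1 / 2) * absPow p z) c)
    (x y : Fin n → ℝ) : (n : ℝ) * c ≤ Ppart n p q a x y := by
  rw [Ppart_eq]
  have h1 : (0:ℝ) ≤ |∑ j, (a j : ℝ) * (x j - y j)| ^ q :=
    Real.rpow_nonneg (abs_nonneg _) _
  have h2 : (n : ℝ) * c ≤
      ∑ j, (|x j + y j - 1| ^ q + (1 / 2) * (absPow p (x j) + absPow p (y j))) := by
    calc (n : ℝ) * c = ∑ _j : Fin n, c := by
          rw [Finset.sum_const, Finset.card_univ, Fintype.card_fin, nsmul_eq_mul]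
      _ ≤ _ := Finset.sum_le_sum fun j _ => coord_lb hp1 hq hc hp0 (x j) (y j)
  linarith

lemma forward_construction (hp0 : 0 ≤ p) (hp1 : p < 1) (hq : 1 ≤ q)
    (hc : IsLeast (Set.range fun z : ℝ => |1 - z| ^ q + (1 / 2) * absPow p z) c)
    (S : Finset (Fin n)) (hS : ∑ i ∈ S, a i = ∑ i ∈ Sᶜ, a i) :
    ∃ x y : Fin n → ℝ, Ppart n p q a x y = (n : ℝ) * c := by
  classical
  obtain ⟨z0, hz0⟩ := hc_mem hc
  refine ⟨fun j => if j ∈ S then z0 else 0, fun j => if j ∈ S then 0 else z0, ?_⟩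
  rw [Ppart_eq]
  have hcast : (∑ i ∈ S, (a i : ℝ)) = ∑ i ∈ Sᶜ, (a i : ℝ) := by exact_mod_cast hS
  have hD : ∑ j, (a j : ℝ) *
      ((if j ∈ S then z0 else 0) - (if j ∈ S then 0 else z0)) = 0 := by
    rw [← Finset.sum_add_sum_compl S]
    have e1 : ∑ j ∈ S, (a j : ℝ) * ((if j ∈ S then z0 else 0) - (if j ∈ S then 0 else z0))
        = (∑ j ∈ S, (a j : ℝ)) * z0 := by
      rw [Finset.sum_mul]
      exact Finset.sum_congr rfl fun j hj => by rw [if_pos hj, if_pos hj]; ring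
    have e2 : ∑ j ∈ Sᶜ, (a j : ℝ) * ((if j ∈ S then z0 else 0) - (if j ∈ S then 0 else z0))
        = -((∑ j ∈ Sᶜ, (a j : ℝ)) * z0) := by
      rw [Finset.sum_mul, ← Finset.sum_neg_distrib]
      exact Finset.sum_congr rfl fun j hj => by
        rw [if_neg (Finset.mem_compl.mp hj), if_neg (Finset.mem_compl.mp hj)]; ring
    rw [e1, e2, hcast]; ring
  have hcoord : ∀ j : Fin n,
      |(if j ∈ S then z0 else 0) + (if j ∈ S then 0 else z0) - 1| ^ q +
        (1 / 2) * (absPow p (if j ∈ S then z0 else 0) + absPow p (if j ∈ S then 0 else z0))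
      = c := by
    intro j
    by_cases hj : j ∈ S <;>
      simp only [if_pos, if_neg, hj, if_true, if_false] <;>
      rw [← hz0] <;> unfold gfun <;>
      rw [absPow_zero] <;> rw [abs_sub_comm] <;> ring_nf <;> simp [abs_sub_comm]
  rw [hD]
  have : ∑ j : Fin n,
      (|(if j ∈ S then z0 else 0) + (if j ∈ S then 0 else z0) - 1| ^ q +
        (1 / 2) * (absPow p (if j ∈ S then z0 else 0) + absPow p (if j ∈ S then 0 else z0)))
      = (n : ℝ) * c := by
    rw [Finset.sum_congr rfl fun j _ => hcoord j, Finset.sum_const, Finset.card_univ,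
      Fintype.card_fin, nsmul_eq_mul]
  rw [this, abs_zero, Real.zero_rpow (by linarith : q ≠ 0), zero_add]

end main

section reverse0

variable {n : ℕ} {q c : ℝ} {a : Fin n → ℤ}

lemma absPow_zero_of_ne {z : ℝ} (hz : z ≠ 0) : absPow 0 z = 1 := by
  unfold absPow; rw [if_neg hz, Real.rpow_zero]

lemma c_eq_half (hq : 1 ≤ q)
    (hc : IsLeast (Set.range fun z : ℝ => |1 - z| ^ q + (1 / 2) * absPow 0 z) c) :
    c = 1 / 2 := by
  have h1 : c ≤ 1 / 2 := c_le_half hq hc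
  obtain ⟨z0, hz0⟩ := hc_mem hc
  have hz0ne : z0 ≠ 0 := minimizer_ne_zero hq hc hz0
  have h0 : gfun 0 q z0 = |1 - z0| ^ q + (1 / 2) := by
    unfold gfun; rw [absPow_zero_of_ne hz0ne]; ring
  have h2 : 1 / 2 ≤ c := by
    rw [← hz0, h0]
    have := Real.rpow_nonneg (abs_nonneg (1 - z0)) q
    linarith
  linarith

lemma sum_ge_single_excess {θ : Fin n → ℝ} {c δ : ℝ} (j : Fin n)
    (hlb : ∀ i, c ≤ θ i) (hj : c + δ ≤ θ j) : (n : ℝ) * c + δ ≤ ∑ i, θ i := by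
  have h5 : θ j - c ≤ ∑ i, (θ i - c) :=
    Finset.single_le_sum (f := fun i => θ i - c)
      (fun i _ => by simpa using hlb i) (Finset.mem_univ j)
  have h6 : ∑ i, (θ i - c) = (∑ i, θ i) - (n : ℝ) * c := by
    rw [Finset.sum_sub_distrib, Finset.sum_const, Finset.card_univ,
      Fintype.card_fin, nsmul_eq_mul]
  rw [h6] at h5
  linarith

lemma reverse_p0 (hq : 1 ≤ q)
    (hc : IsLeast (Set.range fun z : ℝ => |1 - z| ^ q + (1 / 2) * absPow 0 z) c)
    (hinf : sInf (Set.range fun xy : (Fin n → ℝ) × (Fin n → ℝ) =>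
      Ppart n 0 q a xy.1 xy.2) = (n : ℝ) * c) :
    ∃ S : Finset (Fin n), ∑ i ∈ S, a i = ∑ i ∈ Sᶜ, a i := by
  classical
  have hq0 : (0:ℝ) < q := by linarith
  have hchalf : c = 1 / 2 := c_eq_half hq hc
  by_contra hno
  push_neg at hno
  set A : ℝ := ∑ j, |(a j : ℝ)| with hA
  have hA0 : 0 ≤ A := Finset.sum_nonneg fun j _ => abs_nonneg _
  set η : ℝ := 1 / (2 * (1 + A)) with hη
  have hηpos : 0 < η := by rw [hη]; positivity
  set ε : ℝ := min (1 / 2) (η ^ q) with hε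
  have hεpos : 0 < ε := lt_min (by norm_num) (Real.rpow_pos_of_pos hηpos q)
  have key : ∀ x y : Fin n → ℝ, (n : ℝ) * c + ε ≤ Ppart n 0 q a x y := by
    intro x y
    rw [Ppart_eq]
    have hθlb : ∀ j, c ≤ |x j + y j - 1| ^ q +
        (1 / 2) * (absPow 0 (x j) + absPow 0 (y j)) :=
      fun j => coord_lb (by norm_num) hq hc le_rfl (x j) (y j)
    have hDq0 : (0:ℝ) ≤ |∑ j, (a j : ℝ) * (x j - y j)| ^ q :=
      Real.rpow_nonneg (abs_nonneg _) _
    by_cases hbad : ∃ j, (x j = 0 ∧ y j = 0) ∨ (x j ≠ 0 ∧ y j ≠ 0)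
    · obtain ⟨j, hj⟩ := hbad
      have hθj : c + 1 / 2 ≤ |x j + y j - 1| ^ q +
          (1 / 2) * (absPow 0 (x j) + absPow 0 (y j)) := by
        rcases hj with ⟨hx, hy⟩ | ⟨hx, hy⟩
        · rw [hx, hy, absPow_zero, hchalf]
          norm_num
        · rw [absPow_zero_of_ne hx, absPow_zero_of_ne hy, hchalf]
          have h4 := Real.rpow_nonneg (abs_nonneg (x j + y j - 1)) q
          linarith
      have hsum := sum_ge_single_excess j hθlb hθj
      have hε2 : ε ≤ 1 / 2 := min_le_left _ _
      linarith
    · push_neg at hbad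
      have hj : ∀ j, (x j ≠ 0 ∧ y j = 0) ∨ (x j = 0 ∧ y j ≠ 0) := by
        intro j
        have := hbad j
        by_cases hx : x j = 0 <;> by_cases hy : y j = 0 <;> tauto
      have hone : ∀ j, absPow 0 (x j) + absPow 0 (y j) = 1 := by
        intro j
        rcases hj j with ⟨hx, hy⟩ | ⟨hx, hy⟩
        · rw [absPow_zero_of_ne hx, hy, absPow_zero]; ring
        · rw [absPow_zero_of_ne hy, hx, absPow_zero]; ring
      have hsplit : ∑ j, (|x j + y j - 1| ^ q +
            (1 / 2) * (absPow 0 (x j) + absPow 0 (y j)))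
          = (∑ j, |x j + y j - 1| ^ q) + (n : ℝ) * (1 / 2) := by
        rw [Finset.sum_congr rfl fun j _ => by rw [hone j]]
        rw [Finset.sum_add_distrib, Finset.sum_const, Finset.card_univ,
          Fintype.card_fin, nsmul_eq_mul]
        ring
      have hres : ε ≤ |∑ j, (a j : ℝ) * (x j - y j)| ^ q
          + ∑ j, |x j + y j - 1| ^ q := by
        by_contra hlt
        push_neg at hlt
        set D : ℝ := ∑ j, (a j : ℝ) * (x j - y j) with hD
        have hsumnn : ∀ j ∈ (Finset.univ : Finset (Fin n)),
            (0:ℝ) ≤ |x j + y j - 1| ^ q :=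
          fun j _ => Real.rpow_nonneg (abs_nonneg _) _
        have hsnn : (0:ℝ) ≤ ∑ j, |x j + y j - 1| ^ q := Finset.sum_nonneg hsumnn
        have hεη : ε ≤ η ^ q := min_le_right _ _
        have hDlt : |D| < η :=
          (Real.rpow_lt_rpow_iff (abs_nonneg _) hηpos.le hq0).mp (by linarith)
        have hslt : ∀ j, |x j + y j - 1| < η := by
          intro j
          have h8 : |x j + y j - 1| ^ q ≤ ∑ i, |x i + y i - 1| ^ q :=
            Finset.single_le_sum hsumnn (Finset.mem_univ j)
          exact (Real.rpow_lt_rpow_iff (abs_nonneg _) hηpos.le hq0).mp (by linarith)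
        set S : Finset (Fin n) := Finset.univ.filter (fun j => x j ≠ 0) with hS
        set K : ℤ := (∑ i ∈ S, a i) - ∑ i ∈ Sᶜ, a i with hK
        have hKne : K ≠ 0 := sub_ne_zero_of_ne (hno S)
        have hKabs : (1:ℝ) ≤ |(K:ℝ)| := by
          have h9 := Int.one_le_abs hKne
          calc (1:ℝ) = ((1:ℤ):ℝ) := by norm_num
            _ ≤ ((|K|:ℤ):ℝ) := by exact_mod_cast h9
            _ = |(K:ℝ)| := by push_cast; rfl
        have hDsplit : D = (∑ j ∈ S, (a j:ℝ) * (x j + y j)) -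
            ∑ j ∈ Sᶜ, (a j:ℝ) * (x j + y j) := by
          rw [hD, ← Finset.sum_add_sum_compl S, sub_eq_add_neg, ← Finset.sum_neg_distrib]
          congr 1
          · refine Finset.sum_congr rfl fun j hjS => ?_
            have hxne : x j ≠ 0 := (Finset.mem_filter.mp hjS).2
            rcases hj j with ⟨_, hy⟩ | ⟨hx, _⟩
            · rw [hy]; ring
            · exact absurd hx hxne
          · refine Finset.sum_congr rfl fun j hjS => ?_
            have hxe : x j = 0 := by
              have h10 := Finset.mem_compl.mp hjS
              rw [hS, Finset.mem_filter] at h10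
              push_neg at h10
              exact h10 (Finset.mem_univ j)
            rw [hxe]; ring
        have hsum_tel : ∀ T : Finset (Fin n),
            ∑ j ∈ T, (a j:ℝ) * (x j + y j) - ∑ j ∈ T, (a j:ℝ) * (x j + y j - 1)
              = ∑ j ∈ T, (a j:ℝ) := by
          intro T
          rw [← Finset.sum_sub_distrib]
          exact Finset.sum_congr rfl fun j _ => by ring
        have hKcast : (K:ℝ) = (∑ i ∈ S, (a i:ℝ)) - ∑ i ∈ Sᶜ, (a i:ℝ) := by
          rw [hK]; push_cast; ring
        have hKD : (K:ℝ) = D - ((∑ j ∈ S, (a j:ℝ) * (x j + y j - 1)) -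
            ∑ j ∈ Sᶜ, (a j:ℝ) * (x j + y j - 1)) := by
          rw [hKcast, hDsplit, ← hsum_tel S, ← hsum_tel Sᶜ]; ring
        have hEbound : |(∑ j ∈ S, (a j:ℝ) * (x j + y j - 1)) -
            ∑ j ∈ Sᶜ, (a j:ℝ) * (x j + y j - 1)| ≤ A * η := by
          have e1 : ∀ T : Finset (Fin n), |∑ j ∈ T, (a j:ℝ) * (x j + y j - 1)|
              ≤ ∑ j ∈ T, |(a j:ℝ)| * |x j + y j - 1| := by
            intro T
            calc |∑ j ∈ T, (a j:ℝ) * (x j + y j - 1)|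
                ≤ ∑ j ∈ T, |(a j:ℝ) * (x j + y j - 1)| := Finset.abs_sum_le_sum_abs _ _
              _ = ∑ j ∈ T, |(a j:ℝ)| * |x j + y j - 1| :=
                  Finset.sum_congr rfl fun j _ => abs_mul _ _
          have e2 : ∑ j ∈ S, |(a j:ℝ)| * |x j + y j - 1|
              + ∑ j ∈ Sᶜ, |(a j:ℝ)| * |x j + y j - 1|
              = ∑ j, |(a j:ℝ)| * |x j + y j - 1| := Finset.sum_add_sum_compl S _
          have e3 : ∑ j, |(a j:ℝ)| * |x j + y j - 1| ≤ A * η := by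
            rw [hA, Finset.sum_mul]
            exact Finset.sum_le_sum fun j _ =>
              mul_le_mul_of_nonneg_left (hslt j).le (abs_nonneg _)
          calc |(∑ j ∈ S, (a j:ℝ) * (x j + y j - 1)) -
              ∑ j ∈ Sᶜ, (a j:ℝ) * (x j + y j - 1)|
              ≤ |∑ j ∈ S, (a j:ℝ) * (x j + y j - 1)|
                + |∑ j ∈ Sᶜ, (a j:ℝ) * (x j + y j - 1)| := abs_sub _ _
            _ ≤ ∑ j ∈ S, |(a j:ℝ)| * |x j + y j - 1|
                + ∑ j ∈ Sᶜ, |(a j:ℝ)| * |x j + y j - 1| := add_le_add (e1 S) (e1 Sᶜ)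
            _ = ∑ j, |(a j:ℝ)| * |x j + y j - 1| := e2
            _ ≤ A * η := e3
        have hfinal : |(K:ℝ)| < η + A * η := by
          calc |(K:ℝ)| ≤ |D| + |(∑ j ∈ S, (a j:ℝ) * (x j + y j - 1)) -
              ∑ j ∈ Sᶜ, (a j:ℝ) * (x j + y j - 1)| := by rw [hKD]; exact abs_sub _ _
            _ < η + A * η := by linarith
        have : η + A * η = 1 / 2 := by
          rw [hη]; field_simp
        linarith
      rw [hsplit, hchalf]
      linarith
  have hne : (Set.range fun xy : (Fin n → ℝ) × (Fin n → ℝ) =>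
      Ppart n 0 q a xy.1 xy.2).Nonempty := Set.range_nonempty _
  have hlb := le_csInf hne (fun b hb => by
    obtain ⟨w, rfl⟩ := hb
    exact key w.1 w.2)
  rw [hinf] at hlb
  linarith

end reverse0

section reversepos

variable {n : ℕ} {p q c : ℝ} {a : Fin n → ℤ}

lemma minimizer_unique (hp : 0 < p) (hp1 : p < 1) (hq : 1 ≤ q)
    (hc : IsLeast (Set.range fun z : ℝ => |1 - z| ^ q + (1 / 2) * absPow p z) c)
    {z1 z2 : ℝ} (h1 : gfun p q z1 = c) (h2 : gfun p q z2 = c) : z1 = z2 := by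
  rcases lt_trichotomy z1 z2 with h | h | h
  · exact (minimizer_unique_aux hp hp1 hq hc h1 h2 h).elim
  · exact h
  · exact (minimizer_unique_aux hp hp1 hq hc h2 h1 h).elim

lemma continuous_Pfun (hp : 0 < p) (hq : 1 ≤ q) :
    Continuous (fun w : (Fin n → ℝ) × (Fin n → ℝ) => Ppart n p q a w.1 w.2) := by
  have hq0 : (0:ℝ) ≤ q := by linarith
  have hrw : (fun w : (Fin n → ℝ) × (Fin n → ℝ) => Ppart n p q a w.1 w.2)
      = fun w => |∑ j, (a j : ℝ) * (w.1 j - w.2 j)| ^ q +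
        ∑ j, |w.1 j + w.2 j - 1| ^ q +
        (1 / 2) * ∑ j, (|w.1 j| ^ p + |w.2 j| ^ p) := by
    funext w
    unfold Ppart
    simp only [absPow_of_pos hp]
  rw [hrw]
  have c1 : Continuous fun w : (Fin n → ℝ) × (Fin n → ℝ) =>
      |∑ j, (a j : ℝ) * (w.1 j - w.2 j)| ^ q :=
    (Real.continuous_rpow_const hq0).comp (continuous_abs.comp
      (continuous_finset_sum _ fun j _ => continuous_const.mul
        (((continuous_apply j).comp continuous_fst).sub
          ((continuous_apply j).comp continuous_snd))))
  have c2 : Continuous fun w : (Fin n → ℝ) × (Fin n → ℝ) =>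
      ∑ j, |w.1 j + w.2 j - 1| ^ q :=
    continuous_finset_sum _ fun j _ =>
      (Real.continuous_rpow_const hq0).comp (continuous_abs.comp
        ((((continuous_apply j).comp continuous_fst).add
          ((continuous_apply j).comp continuous_snd)).sub continuous_const))
  have c3 : Continuous fun w : (Fin n → ℝ) × (Fin n → ℝ) =>
      (1 / 2 : ℝ) * ∑ j, (|w.1 j| ^ p + |w.2 j| ^ p) :=
    continuous_const.mul (continuous_finset_sum _ fun j _ =>
      ((Real.continuous_rpow_const hp.le).comp
        (continuous_abs.comp ((continuous_apply j).comp continuous_fst))).add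
      ((Real.continuous_rpow_const hp.le).comp
        (continuous_abs.comp ((continuous_apply j).comp continuous_snd))))
  exact (c1.add c2).add c3

lemma abs_le_of_absPow_le (hp : 0 < p) {z M : ℝ} (hM : 0 ≤ M)
    (h : absPow p z ≤ M) : |z| ≤ M ^ (1 / p) := by
  rw [absPow_of_pos hp] at h
  have h1 := Real.rpow_le_rpow (Real.rpow_nonneg (abs_nonneg z) p) h
    (by positivity : (0:ℝ) ≤ 1 / p)
  rwa [← Real.rpow_mul (abs_nonneg z), mul_one_div, div_self hp.ne',
    Real.rpow_one] at h1

lemma Ppart_coord_bound (hp0 : 0 ≤ p) (x y : Fin n → ℝ) (j : Fin n) :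
    absPow p (x j) ≤ 2 * Ppart n p q a x y ∧
    absPow p (y j) ≤ 2 * Ppart n p q a x y := by
  unfold Ppart
  have h1 : (0:ℝ) ≤ |∑ j, (a j : ℝ) * (x j - y j)| ^ q :=
    Real.rpow_nonneg (abs_nonneg _) _
  have h2 : (0:ℝ) ≤ ∑ j, |x j + y j - 1| ^ q :=
    Finset.sum_nonneg fun i _ => Real.rpow_nonneg (abs_nonneg _) _
  have h3 : absPow p (x j) + absPow p (y j) ≤
      ∑ i, (absPow p (x i) + absPow p (y i)) :=
    Finset.single_le_sum (f := fun i => absPow p (x i) + absPow p (y i))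
      (fun i _ => add_nonneg (absPow_nonneg _) (absPow_nonneg _)) (Finset.mem_univ j)
  have h4 := absPow_nonneg (p := p) (x j)
  have h5 := absPow_nonneg (p := p) (y j)
  constructor <;> linarith

lemma reverse_ppos (hp : 0 < p) (hp1 : p < 1) (hq : 1 ≤ q)
    (hc : IsLeast (Set.range fun z : ℝ => |1 - z| ^ q + (1 / 2) * absPow p z) c)
    (hinf : sInf (Set.range fun xy : (Fin n → ℝ) × (Fin n → ℝ) =>
      Ppart n p q a xy.1 xy.2) = (n : ℝ) * c) :
    ∃ S : Finset (Fin n), ∑ i ∈ S, a i = ∑ i ∈ Sᶜ, a i := by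
  classical
  set f : (Fin n → ℝ) × (Fin n → ℝ) → ℝ := fun w => Ppart n p q a w.1 w.2 with hf
  have hc0 : 0 ≤ c := c_nonneg hc
  set M : ℝ := (n : ℝ) * c + 1 with hM
  have hM0 : (0:ℝ) ≤ 2 * M := by rw [hM]; positivity
  set B : ℝ := (2 * M) ^ (1 / p) with hB
  have hB0 : 0 ≤ B := Real.rpow_nonneg hM0 _
  have hlb : ∀ w : (Fin n → ℝ) × (Fin n → ℝ), (n : ℝ) * c ≤ f w :=
    fun w => Ppart_lb (le_of_lt hp) hp1 hq hc w.1 w.2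
  have hne : (Set.range f).Nonempty := Set.range_nonempty _
  have hbdd : BddBelow (Set.range f) := ⟨(n : ℝ) * c, by
    rintro b ⟨w, rfl⟩; exact hlb w⟩
  -- a point with value < M
  have hltM : sInf (Set.range f) < M := by rw [hinf, hM]; linarith
  obtain ⟨b0, hb0mem, hb0⟩ := (csInf_lt_iff hbdd hne).mp hltM
  obtain ⟨w0, rfl⟩ := hb0mem
  -- bound: f w ≤ M implies w in ball
  have hball : ∀ w : (Fin n → ℝ) × (Fin n → ℝ), f w ≤ M →
      w ∈ Metric.closedBall (0 : (Fin n → ℝ) × (Fin n → ℝ)) B := by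
    intro w hw
    rw [mem_closedBall_zero_iff, Prod.norm_def]
    have hcb : ∀ j, absPow p (w.1 j) ≤ 2 * M ∧ absPow p (w.2 j) ≤ 2 * M := by
      intro j
      obtain ⟨e1, e2⟩ := Ppart_coord_bound (a := a) (q := q) hp.le w.1 w.2 j
      constructor <;> linarith
    apply max_le
    · rw [pi_norm_le_iff_of_nonneg hB0]
      intro j
      rw [Real.norm_eq_abs, hB]
      exact abs_le_of_absPow_le hp hM0 (hcb j).1
    · rw [pi_norm_le_iff_of_nonneg hB0]
      intro j
      rw [Real.norm_eq_abs, hB]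
      exact abs_le_of_absPow_le hp hM0 (hcb j).2
  have hw0ball : w0 ∈ Metric.closedBall (0 : (Fin n → ℝ) × (Fin n → ℝ)) B :=
    hball w0 hb0.le
  have hcompact : IsCompact (Metric.closedBall (0 : (Fin n → ℝ) × (Fin n → ℝ)) B) :=
    isCompact_closedBall _ _
  obtain ⟨w, hwball, hwmin⟩ := hcompact.exists_isMinOn ⟨w0, hw0ball⟩
    (continuous_Pfun hp hq).continuousOn
  have hglob : ∀ v : (Fin n → ℝ) × (Fin n → ℝ), f w ≤ f v := by
    intro v
    by_cases hv : v ∈ Metric.closedBall (0 : (Fin n → ℝ) × (Fin n → ℝ)) B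
    · exact hwmin hv
    · have h1 : M < f v := by
        by_contra h
        push_neg at h
        exact hv (hball v h)
      have h2 : f w ≤ f w0 := hwmin hw0ball
      linarith
  have hfw : f w = (n : ℝ) * c := by
    have h1 : f w ≤ sInf (Set.range f) := le_csInf hne (by rintro b ⟨v, rfl⟩; exact hglob v)
    rw [hinf] at h1
    exact le_antisymm h1 (hlb w)
  -- equality analysis
  obtain ⟨z0, hz0⟩ := hc_mem hc
  have hz0pos : 0 < z0 := minimizer_pos hq hc hz0
  set x := w.1 with hx
  set y := w.2 with hy
  have hPeq : |∑ j, (a j : ℝ) * (x j - y j)| ^ q +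
      ∑ j, (|x j + y j - 1| ^ q + (1 / 2) * (absPow p (x j) + absPow p (y j)))
      = (n : ℝ) * c := by
    rw [← Ppart_eq]; exact hfw
  have hθlb : ∀ j, c ≤ |x j + y j - 1| ^ q +
      (1 / 2) * (absPow p (x j) + absPow p (y j)) :=
    fun j => coord_lb hp1 hq hc hp.le (x j) (y j)
  have hsumlb : (n : ℝ) * c ≤
      ∑ j, (|x j + y j - 1| ^ q + (1 / 2) * (absPow p (x j) + absPow p (y j))) := by
    calc (n : ℝ) * c = ∑ _j : Fin n, c := by
          rw [Finset.sum_const, Finset.card_univ, Fintype.card_fin, nsmul_eq_mul]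
      _ ≤ _ := Finset.sum_le_sum fun j _ => hθlb j
  have hDq : |∑ j, (a j : ℝ) * (x j - y j)| ^ q = 0 := by
    have h1 : (0:ℝ) ≤ |∑ j, (a j : ℝ) * (x j - y j)| ^ q :=
      Real.rpow_nonneg (abs_nonneg _) _
    linarith
  have hDzero : ∑ j, (a j : ℝ) * (x j - y j) = 0 := by
    have := (Real.rpow_eq_zero_iff_of_nonneg (abs_nonneg _)).mp hDq
    exact abs_eq_zero.mp this.1
  have hθeq : ∀ j, |x j + y j - 1| ^ q +
      (1 / 2) * (absPow p (x j) + absPow p (y j)) = c := by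
    have hsum : ∑ j, (|x j + y j - 1| ^ q +
        (1 / 2) * (absPow p (x j) + absPow p (y j))) = (n : ℝ) * c := by
      rw [hDq] at hPeq; linarith
    have hzero : ∑ j, ((|x j + y j - 1| ^ q +
        (1 / 2) * (absPow p (x j) + absPow p (y j))) - c) = 0 := by
      rw [Finset.sum_sub_distrib, Finset.sum_const, Finset.card_univ,
        Fintype.card_fin, nsmul_eq_mul, hsum]
      ring
    intro j
    have := (Finset.sum_eq_zero_iff_of_nonneg
      (fun i _ => by simpa using sub_nonneg.mpr (hθlb i))).mp hzero j (Finset.mem_univ j)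
    have h2 : (|x j + y j - 1| ^ q +
        (1 / 2) * (absPow p (x j) + absPow p (y j))) - c = 0 := by simpa using this
    linarith
  -- per-coordinate structure
  have hstruct : ∀ j, (x j = z0 ∧ y j = 0) ∨ (x j = 0 ∧ y j = z0) := by
    intro j
    have h1 : c ≤ gfun p q (x j + y j) := hc_lb hc _
    have h2 : gfun p q (x j + y j) ≤ |x j + y j - 1| ^ q +
        (1 / 2) * (absPow p (x j) + absPow p (y j)) := by
      unfold gfun
      rw [abs_sub_comm (1 : ℝ) (x j + y j)]
      have := absPow_add_le hp.le hp1 (x j) (y j)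
      linarith
    have hgc : gfun p q (x j + y j) = c := le_antisymm (by rw [← hθeq j] at h1 ⊢; linarith) h1
    -- equality in subadditivity
    have hsubeq : absPow p (x j) + absPow p (y j) = absPow p (x j + y j) := by
      have e1 : |x j + y j - 1| = |1 - (x j + y j)| := abs_sub_comm _ _
      have e2 : |1 - (x j + y j)| ^ q + (1 / 2) * absPow p (x j + y j) = c := hgc
      have e3 := hθeq j
      rw [e1] at e3
      linarith
    have hxor : x j = 0 ∨ y j = 0 := by
      by_contra hcon
      push_neg at hcon
      have := absPow_add_lt hp.le hp1 hcon.1 hcon.2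
      linarith [hsubeq]
    have hzeq : x j + y j = z0 := minimizer_unique hp hp1 hq hc hgc hz0
    rcases hxor with hx0 | hy0
    · right
      refine ⟨hx0, ?_⟩
      rw [hx0] at hzeq; linarith [hzeq]
    · left
      refine ⟨?_, hy0⟩
      rw [hy0] at hzeq; linarith [hzeq]
  -- build the partition
  set S : Finset (Fin n) := Finset.univ.filter (fun j => y j = 0) with hS
  have hdS : ∀ j ∈ S, x j - y j = z0 := by
    intro j hj
    have hyj : y j = 0 := (Finset.mem_filter.mp hj).2
    rcases hstruct j with ⟨hxj, hyj'⟩ | ⟨hxj, hyj'⟩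
    · rw [hxj, hyj]; ring
    · rw [hyj] at hyj'; exact absurd hyj'.symm hz0pos.ne'
  have hdSc : ∀ j ∈ Sᶜ, x j - y j = -z0 := by
    intro j hj
    have hyj : y j ≠ 0 := by
      have h10 := Finset.mem_compl.mp hj
      rw [hS, Finset.mem_filter] at h10
      push_neg at h10
      exact h10 (Finset.mem_univ j)
    rcases hstruct j with ⟨hxj, hyj'⟩ | ⟨hxj, hyj'⟩
    · exact absurd hyj' hyj
    · rw [hxj, hyj']; ring
  have hDsplit : ∑ j, (a j : ℝ) * (x j - y j)
      = ((∑ j ∈ S, (a j:ℝ)) - ∑ j ∈ Sᶜ, (a j:ℝ)) * z0 := by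
    have e1 : ∑ j ∈ S, (a j:ℝ) * (x j - y j) = (∑ j ∈ S, (a j:ℝ)) * z0 := by
      rw [Finset.sum_mul]
      exact Finset.sum_congr rfl fun j hj => by rw [hdS j hj]
    have e2 : ∑ j ∈ Sᶜ, (a j:ℝ) * (x j - y j) = -((∑ j ∈ Sᶜ, (a j:ℝ)) * z0) := by
      rw [Finset.sum_mul, ← Finset.sum_neg_distrib]
      exact Finset.sum_congr rfl fun j hj => by rw [hdSc j hj]; ring
    rw [← Finset.sum_add_sum_compl S, e1, e2]
    ring
  have hfin : (∑ j ∈ S, (a j:ℝ)) = ∑ j ∈ Sᶜ, (a j:ℝ) := by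
    rw [hDsplit] at hDzero
    rcases mul_eq_zero.mp hDzero with h | h
    · linarith [sub_eq_zero.mp h]
    · exact absurd h hz0pos.ne'
  exact ⟨S, by exact_mod_cast hfin⟩

end reversepos

/-- The set `{a_1, …, a_n}` admits an equitable partition iff the infimum of the
reduction objective `P` over `ℝ^n × ℝ^n` equals `n·c(p,q)`, where `c(p,q)` is the
minimum of `g(z) = |1 − z|^q + (1/2)|z|^p` over ℝ; moreover, when such a
partition exists the infimum is attained. -/
theorem stmt_10 (n : ℕ) (p q c : ℝ) (hp0 : 0 ≤ p) (hp1 : p < 1) (hq : 1 ≤ q)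
    (a : Fin n → ℤ)
    (hc : IsLeast (Set.range fun z : ℝ => |1 - z| ^ q + (1 / 2) * absPow p z) c) :
    ((∃ S : Finset (Fin n), ∑ i ∈ S, a i = ∑ i ∈ Sᶜ, a i) ↔
      sInf (Set.range fun xy : (Fin n → ℝ) × (Fin n → ℝ) =>
        Ppart n p q a xy.1 xy.2) = (n : ℝ) * c) ∧
    ((∃ S : Finset (Fin n), ∑ i ∈ S, a i = ∑ i ∈ Sᶜ, a i) →
      ∃ x y : Fin n → ℝ, Ppart n p q a x y = (n : ℝ) * c) := by
  constructor
  · constructor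
    · rintro ⟨S, hS⟩
      obtain ⟨x, y, hxy⟩ := forward_construction hp0 hp1 hq hc S hS
      apply IsLeast.csInf_eq
      constructor
      · exact ⟨(x, y), hxy⟩
      · rintro b ⟨w, rfl⟩
        exact Ppart_lb hp0 hp1 hq hc w.1 w.2
    · intro hinf
      rcases eq_or_lt_of_le hp0 with hp | hp
      · subst hp
        exact reverse_p0 hq hc hinf
      · exact reverse_ppos hp hp1 hq hc hinf
  · rintro ⟨S, hS⟩
    exact forward_construction hp0 hp1 hq hc S hS
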